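/- For Spin(16), the tensor product Sym^{2k}_0(ℂ^{16}) ⊗ Σ⁺_{16} of the 2k-th harmonic symmetric power of the vector representation with the positive half-spin representation decomposes as the direct sum of the irreducible representations with highest weights (1/2)(4k+1, 1, 1, 1, 1, 1, 1, 1) and (1/2)(4k-1, 1, 1, 1, 1, 1, 1, -1). -/

import Mathlib

open Finset

set_option maxRecDepth 100000

/-- The Weyl alternating sum `A_λ = ∑_{w ∈ W(D_8)} sgn(w) e^{w(λ)}` for the root
system `D_8` of `Spin(16)`, evaluated at `t ∈ ℝ^8` (with `e^μ(t) = exp⟨μ, t⟩`).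
The Weyl group of `D_8` consists of permutations combined with an even number of
sign changes. -/
noncomputable def weylAltD8 (lam : Fin 8 → ℝ) (t : Fin 8 → ℝ) : ℝ :=
  ∑ σ : Equiv.Perm (Fin 8),
    ∑ S ∈ Finset.univ.filter (fun S : Finset (Fin 8) => Even S.card),
      ((Equiv.Perm.sign σ : ℤ) : ℝ) *
        Real.exp (∑ i, (if i ∈ S then -lam i else lam i) * t (σ i))

/-- Half-sum of the positive roots of `D_8`: `ρ = (7, 6, …, 1, 0)`. -/
def rhoD8 : Fin 8 → ℝ := fun i => 7 - (i : ℕ)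

/-! ### Auxiliary definitions -/

open Equiv
open scoped symmDiff

/-- Exponential of a pairing. -/
noncomputable def wExp (lam t : Fin 8 → ℝ) : ℝ := Real.exp (∑ i, lam i * t i)

/-- The finset of even-cardinality subsets of `Fin 8`. -/
def evens : Finset (Finset (Fin 8)) :=
  Finset.univ.filter (fun S : Finset (Fin 8) => Even S.card)

/-- Action of a signed permutation on a weight. -/
def wAct (σ : Perm (Fin 8)) (S : Finset (Fin 8)) (lam : Fin 8 → ℝ) : Fin 8 → ℝ :=
  fun j => if σ.symm j ∈ S then -lam (σ.symm j) else lam (σ.symm j)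

/-- Weight of the half-spin representation indexed by a sign set `T`. -/
noncomputable def nuT (T : Finset (Fin 8)) : Fin 8 → ℝ :=
  fun i => if i ∈ T then -(1/2) else 1/2

/-- Doubled integer coordinates of `ρ + ν_T`. -/
def icoord (T : Finset (Fin 8)) (i : Fin 8) : ℤ :=
  15 - 2 * (i : ℕ) - (if i ∈ T then 2 else 0)

lemma mem_image_perm (σ : Perm (Fin 8)) (A : Finset (Fin 8)) (x : Fin 8) :
    σ x ∈ A.image σ ↔ x ∈ A := by
  constructor
  · intro h
    obtain ⟨a, ha, he⟩ := Finset.mem_image.1 h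
    rwa [← σ.injective he]
  · exact fun h => Finset.mem_image_of_mem σ h

lemma mem_image_perm' (σ : Perm (Fin 8)) (A : Finset (Fin 8)) (j : Fin 8) :
    j ∈ A.image σ ↔ σ.symm j ∈ A := by
  conv_lhs => rw [show j = σ (σ.symm j) from (σ.apply_symm_apply j).symm]
  exact mem_image_perm σ A _

lemma weylAltD8_eq (lam t : Fin 8 → ℝ) :
    weylAltD8 lam t =
      ∑ σ : Perm (Fin 8), ∑ S ∈ evens,
        ((Perm.sign σ : ℤ) : ℝ) * wExp (wAct σ S lam) t := by
  unfold weylAltD8 evens wExp wAct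
  refine Finset.sum_congr rfl fun σ _ => Finset.sum_congr rfl fun S _ => ?_
  congr 2
  exact Fintype.sum_equiv σ _ _ (fun i => by simp)

lemma even_symmDiff_card (S T : Finset (Fin 8)) :
    Even (S ∆ T).card ↔ (Even S.card ↔ Even T.card) := by
  have h2 : (S ∆ T).card = (S \ T).card + (T \ S).card := by
    rw [symmDiff_def, sup_eq_union, Finset.card_union_of_disjoint disjoint_sdiff_sdiff]
  have h3 : (S \ T).card + (S ∩ T).card = S.card := Finset.card_sdiff_add_card_inter S T
  have h4 : (T \ S).card + (T ∩ S).card = T.card := Finset.card_sdiff_add_card_inter T S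
  have h5 : (S ∩ T).card = (T ∩ S).card := by rw [Finset.inter_comm]
  simp only [Nat.even_iff] at *
  omega

lemma wAct_nuT (σ : Perm (Fin 8)) (S T : Finset (Fin 8)) :
    wAct σ S (nuT T) = nuT ((S ∆ T).image σ) := by
  funext j
  unfold wAct nuT
  simp only [mem_image_perm']
  by_cases h1 : σ.symm j ∈ S <;> by_cases h2 : σ.symm j ∈ T <;>
    simp [h1, h2, Finset.mem_symmDiff]

lemma wAct_add (σ : Perm (Fin 8)) (S : Finset (Fin 8)) (x y : Fin 8 → ℝ) :
    wAct σ S (fun i => x i + y i) = fun j => wAct σ S x j + wAct σ S y j := by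
  funext j
  unfold wAct
  split <;> ring

lemma wExp_add (x y t : Fin 8 → ℝ) :
    wExp (fun i => x i + y i) t = wExp x t * wExp y t := by
  unfold wExp
  rw [← Real.exp_add]
  congr 1
  rw [← Finset.sum_add_distrib]
  exact Finset.sum_congr rfl fun i _ => by ring

/-- Brauer–Klimyk style reindexing lemma. -/
lemma bk (μ : Fin 8 → ℝ) (t : Fin 8 → ℝ) :
    weylAltD8 μ t * ∑ T ∈ evens, wExp (nuT T) t
      = ∑ T ∈ evens, weylAltD8 (fun i => μ i + nuT T i) t := by
  have L : weylAltD8 μ t * ∑ T ∈ evens, wExp (nuT T) t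
      = ∑ σ : Perm (Fin 8), ∑ S ∈ evens, ∑ T ∈ evens,
          ((Perm.sign σ : ℤ) : ℝ) * wExp (wAct σ S μ) t * wExp (nuT T) t := by
    rw [weylAltD8_eq, Finset.sum_mul]
    refine Finset.sum_congr rfl fun σ _ => ?_
    rw [Finset.sum_mul]
    refine Finset.sum_congr rfl fun S _ => ?_
    rw [Finset.mul_sum]
  have R : ∑ T ∈ evens, weylAltD8 (fun i => μ i + nuT T i) t
      = ∑ σ : Perm (Fin 8), ∑ S ∈ evens, ∑ T ∈ evens,
          ((Perm.sign σ : ℤ) : ℝ) * wExp (wAct σ S (fun i => μ i + nuT T i)) t := by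
    simp only [weylAltD8_eq]
    rw [Finset.sum_comm]
    exact Finset.sum_congr rfl fun σ _ => Finset.sum_comm
  rw [L, R]
  refine Finset.sum_congr rfl fun σ _ => ?_
  refine Finset.sum_congr rfl fun S hS => ?_
  have hSe : Even S.card := by simpa [evens] using hS
  refine Finset.sum_nbij' (fun T => S ∆ (T.image σ.symm)) (fun T => (S ∆ T).image σ)
    ?_ ?_ ?_ ?_ ?_
  · intro T hT
    have hTe : Even T.card := by simpa [evens] using hT
    simp only [evens, Finset.mem_filter, Finset.mem_univ, true_and]
    rw [even_symmDiff_card, Finset.card_image_of_injective _ σ.symm.injective]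
    tauto
  · intro T hT
    have hTe : Even T.card := by simpa [evens] using hT
    simp only [evens, Finset.mem_filter, Finset.mem_univ, true_and]
    rw [Finset.card_image_of_injective _ σ.injective, even_symmDiff_card]
    tauto
  · intro T _
    show ((S ∆ (S ∆ (T.image σ.symm))).image σ) = T
    rw [symmDiff_symmDiff_cancel_left, Finset.image_image]
    have h : (σ ∘ σ.symm : Fin 8 → Fin 8) = id := by funext x; simp
    rw [h, Finset.image_id]
  · intro T _
    show S ∆ (((S ∆ T).image σ).image σ.symm) = T
    rw [Finset.image_image]
    have h : (σ.symm ∘ σ : Fin 8 → Fin 8) = id := by funext x; simp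
    rw [h, Finset.image_id, symmDiff_symmDiff_cancel_left]
  · intro T _
    rw [wAct_add, wExp_add, wAct_nuT, symmDiff_symmDiff_cancel_left, Finset.image_image]
    have h : (σ ∘ σ.symm : Fin 8 → Fin 8) = id := by funext x; simp
    rw [h, Finset.image_id]
    ring

/-- General vanishing via a sign-reversing reindexing. -/
lemma vanish_aux (lam t : Fin 8 → ℝ) (τ : Equiv.Perm (Fin 8)) (hsgn : Perm.sign τ = -1)
    (hτsymm : τ.symm = τ)
    (F : Finset (Fin 8) → Finset (Fin 8))
    (hFeven : ∀ S, Even (F S).card ↔ Even S.card)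
    (hFinv : ∀ S, F (F S) = S)
    (h0 : ∀ S : Finset (Fin 8), ∀ m : Fin 8,
      (if τ m ∈ F S then -lam (τ m) else lam (τ m))
        = (if m ∈ S then -lam m else lam m)) :
    weylAltD8 lam t = 0 := by
  have hact : ∀ (σ : Perm (Fin 8)) (S : Finset (Fin 8)),
      wAct (σ * τ) (F S) lam = wAct σ S lam := by
    intro σ S
    funext j'
    have hsymm : (σ * τ).symm j' = τ (σ.symm j') := by
      rw [show (σ * τ).symm j' = τ.symm (σ.symm j') from rfl, hτsymm]
    show (if (σ * τ).symm j' ∈ F S then -lam ((σ * τ).symm j')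
        else lam ((σ * τ).symm j'))
      = (if σ.symm j' ∈ S then -lam (σ.symm j') else lam (σ.symm j'))
    rw [hsymm]
    exact h0 S (σ.symm j')
  have hmem : ∀ S ∈ evens, F S ∈ evens := by
    intro S hS
    simp only [evens, Finset.mem_filter, Finset.mem_univ, true_and] at hS ⊢
    exact (hFeven S).2 hS
  have main : weylAltD8 lam t = - weylAltD8 lam t := by
    conv_lhs => rw [weylAltD8_eq]
    conv_rhs => rw [weylAltD8_eq]
    simp only [← Finset.sum_neg_distrib]
    refine Fintype.sum_equiv (Equiv.mulRight τ) _ _ ?_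
    intro σ
    refine Finset.sum_nbij' F F hmem hmem (fun S _ => hFinv S) (fun S _ => hFinv S) ?_
    intro S _
    show ((Perm.sign σ : ℤ) : ℝ) * wExp (wAct σ S lam) t
        = -(((Perm.sign (σ * τ) : ℤ) : ℝ) * wExp (wAct (σ * τ) (F S) lam) t)
    rw [hact, Equiv.Perm.sign_mul, hsgn]
    push_cast
    ring
  linarith

lemma swap_facts {i j : Fin 8} (hij : i ≠ j) :
    Perm.sign (Equiv.swap i j) = -1 ∧ Equiv.swap i j * Equiv.swap i j = 1 ∧
      (Equiv.swap i j).symm = Equiv.swap i j ∧ Equiv.swap i j ≠ 1 := by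
  refine ⟨Equiv.Perm.sign_swap hij, Equiv.swap_mul_self i j, Equiv.symm_swap i j, ?_⟩
  intro h
  have : Equiv.swap i j i = i := by rw [h]; rfl
  rw [Equiv.swap_apply_left] at this
  exact hij this.symm

/-- Vanishing when two coordinates are equal. -/
lemma vanish_eq (lam : Fin 8 → ℝ) (t : Fin 8 → ℝ) {i j : Fin 8} (hij : i ≠ j)
    (h : lam i = lam j) : weylAltD8 lam t = 0 := by
  obtain ⟨hs1, hs2, hs3, hs4⟩ := swap_facts hij
  set τ := Equiv.swap i j with hτ
  refine vanish_aux lam t τ hs1 hs3 (fun S => S.image τ) ?_ ?_ ?_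
  · intro S
    show Even (S.image τ).card ↔ Even S.card
    rw [Finset.card_image_of_injective _ τ.injective]
  · intro S
    show (S.image τ).image τ = S
    rw [Finset.image_image]
    have hcc : (τ ∘ τ : Fin 8 → Fin 8) = id := by
      funext x
      have : τ (τ x) = (τ * τ) x := rfl
      simp [this, hs2]
    rw [hcc, Finset.image_id]
  · intro S m
    show (if τ m ∈ S.image τ then -lam (τ m) else lam (τ m))
        = (if m ∈ S then -lam m else lam m)
    have hl : lam (τ m) = lam m := by
      by_cases h1 : m = i
      · rw [h1, hτ, Equiv.swap_apply_left, ← h]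
      · by_cases h2 : m = j
        · rw [h2, hτ, Equiv.swap_apply_right, h]
        · rw [hτ, Equiv.swap_apply_of_ne_of_ne h1 h2]
    simp only [mem_image_perm, hl]

/-- Vanishing when two coordinates are opposite. -/
lemma vanish_neg (lam : Fin 8 → ℝ) (t : Fin 8 → ℝ) {i j : Fin 8} (hij : i ≠ j)
    (h : lam i = -lam j) : weylAltD8 lam t = 0 := by
  obtain ⟨hs1, hs2, hs3, hs4⟩ := swap_facts hij
  set τ := Equiv.swap i j with hτ
  have hpair : ({i, j} : Finset (Fin 8)).image τ = {i, j} := by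
    rw [Finset.image_insert, Finset.image_singleton, hτ, Equiv.swap_apply_left,
      Equiv.swap_apply_right, Finset.pair_comm]
  have hcc : (τ ∘ τ : Fin 8 → Fin 8) = id := by
    funext x
    have : τ (τ x) = (τ * τ) x := rfl
    simp [this, hs2]
  refine vanish_aux lam t τ hs1 hs3 (fun S => (S.image τ) ∆ {i, j}) ?_ ?_ ?_
  · intro S
    show Even ((S.image τ) ∆ {i, j}).card ↔ Even S.card
    rw [even_symmDiff_card, Finset.card_image_of_injective _ τ.injective,
      Finset.card_pair hij]
    simp [Nat.even_iff]
  · intro S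
    show (((S.image τ) ∆ {i, j}).image τ) ∆ {i, j} = S
    rw [Finset.image_symmDiff _ _ τ.injective, hpair, Finset.image_image, hcc,
      Finset.image_id, symmDiff_symmDiff_cancel_right]
  · intro S m
    show (if τ m ∈ (S.image τ) ∆ {i, j} then -lam (τ m) else lam (τ m))
        = (if m ∈ S then -lam m else lam m)
    by_cases h1 : m = i
    · subst h1
      rw [hτ, Equiv.swap_apply_left]
      have hjmem : j ∈ (Finset.image (⇑τ) S) ∆ {m, j} ↔ m ∉ S := by
        rw [Finset.mem_symmDiff]
        have : j ∈ Finset.image (⇑τ) S ↔ m ∈ S := by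
          conv_lhs => rw [show j = τ m by rw [hτ, Equiv.swap_apply_left]]
          exact mem_image_perm τ S m
        simp [this]
      by_cases hm : m ∈ S <;> simp [← hτ, hjmem, hm, h] 
    · by_cases h2 : m = j
      · subst h2
        rw [hτ, Equiv.swap_apply_right]
        have himem : i ∈ (Finset.image (⇑τ) S) ∆ {i, m} ↔ m ∉ S := by
          rw [Finset.mem_symmDiff]
          have : i ∈ Finset.image (⇑τ) S ↔ m ∈ S := by
            conv_lhs => rw [show i = τ m by rw [hτ, Equiv.swap_apply_right]]
            exact mem_image_perm τ S m
          simp [this]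
        by_cases hm : m ∈ S <;> simp [← hτ, himem, hm, h]
      · rw [hτ, Equiv.swap_apply_of_ne_of_ne h1 h2]
        have hmmem : m ∈ (Finset.image (⇑τ) S) ∆ {i, j} ↔ m ∈ S := by
          rw [Finset.mem_symmDiff]
          have hmm : m ∈ Finset.image (⇑τ) S ↔ m ∈ S := by
            conv_lhs => rw [show m = τ m by rw [hτ, Equiv.swap_apply_of_ne_of_ne h1 h2]]
            exact mem_image_perm τ S m
          simp [hmm, h1, h2]
        simp only [← hτ, hmmem]

lemma collide1 : ∀ T : Finset (Fin 8), Even T.card → T ≠ ∅ →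
    ∃ i j : Fin 8, i ≠ j ∧ (icoord T i = icoord T j ∨ icoord T i = -icoord T j) := by
  decide

lemma collide2 : ∀ T : Finset (Fin 8), Even T.card → T ≠ ∅ →
    T ≠ ({0, 7} : Finset (Fin 8)) →
    ∃ i j : Fin 8, i ≠ 0 ∧ j ≠ 0 ∧ i ≠ j ∧
      (icoord T i = icoord T j ∨ icoord T i = -icoord T j) := by
  decide

lemma rho_nu (T : Finset (Fin 8)) (m : Fin 8) :
    rhoD8 m + nuT T m = (icoord T m : ℝ) / 2 := by
  unfold rhoD8 nuT icoord
  by_cases h : m ∈ T <;> simp only [h, if_true, if_false] <;> push_cast <;> ring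

set_option maxHeartbeats 1000000 in
theorem spin16_sym_tensor_halfspin_decomp (k : ℕ) (hk : 1 ≤ k) (t : Fin 8 → ℝ) :
    let lam₁ : Fin 8 → ℝ := fun i => if (i : ℕ) = 0 then 2 * (k : ℝ) else 0
    let lam₂ : Fin 8 → ℝ := fun _ => 1 / 2
    let μ₁ : Fin 8 → ℝ := fun i =>
      if (i : ℕ) = 0 then (4 * (k : ℝ) + 1) / 2 else 1 / 2
    let μ₂ : Fin 8 → ℝ := fun i =>
      if (i : ℕ) = 0 then (4 * (k : ℝ) - 1) / 2
      else if (i : ℕ) = 7 then -(1 / 2) else 1 / 2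
    weylAltD8 (fun i => lam₁ i + rhoD8 i) t * weylAltD8 (fun i => lam₂ i + rhoD8 i) t
      = (weylAltD8 (fun i => μ₁ i + rhoD8 i) t
          + weylAltD8 (fun i => μ₂ i + rhoD8 i) t) * weylAltD8 rhoD8 t := by
  intro lam₁ lam₂ μ₁ μ₂
  show weylAltD8 (fun i => (if (i : ℕ) = 0 then 2 * (k : ℝ) else 0) + rhoD8 i) t *
      weylAltD8 (fun i => 1 / 2 + rhoD8 i) t
    = (weylAltD8 (fun i =>
          (if (i : ℕ) = 0 then (4 * (k : ℝ) + 1) / 2 else 1 / 2) + rhoD8 i) t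
        + weylAltD8 (fun i =>
          (if (i : ℕ) = 0 then (4 * (k : ℝ) - 1) / 2
            else if (i : ℕ) = 7 then -(1 / 2) else 1 / 2) + rhoD8 i) t)
      * weylAltD8 rhoD8 t
  set X : ℝ := ∑ T ∈ evens, wExp (nuT T) t with hX
  -- Step 1 : A(ρ) * X = A(λ₂ + ρ)
  have h1 : weylAltD8 rhoD8 t * X = weylAltD8 (fun i => 1 / 2 + rhoD8 i) t := by
    rw [hX, bk]
    have e0 : (fun i : Fin 8 => rhoD8 i + nuT (∅ : Finset (Fin 8)) i)
        = (fun i : Fin 8 => 1 / 2 + rhoD8 i) := by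
      funext i
      simp [nuT]
      ring
    rw [Finset.sum_eq_single_of_mem (∅ : Finset (Fin 8)) (by simp [evens]), e0]
    · intro b hb hne
      obtain ⟨i, j, hij, hc | hc⟩ := collide1 b (by simpa [evens] using hb) hne
      · exact vanish_eq _ t hij (by rw [rho_nu, rho_nu, hc])
      · refine vanish_neg _ t hij ?_
        rw [rho_nu, rho_nu, hc]
        push_cast
        ring
  -- Step 2 : A(λ₁ + ρ) * X = A(μ₁ + ρ) + A(μ₂ + ρ)
  have h2 : weylAltD8 (fun i => (if (i : ℕ) = 0 then 2 * (k : ℝ) else 0) + rhoD8 i) t * X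
      = weylAltD8 (fun i =>
          (if (i : ℕ) = 0 then (4 * (k : ℝ) + 1) / 2 else 1 / 2) + rhoD8 i) t
        + weylAltD8 (fun i =>
          (if (i : ℕ) = 0 then (4 * (k : ℝ) - 1) / 2
            else if (i : ℕ) = 7 then -(1 / 2) else 1 / 2) + rhoD8 i) t := by
    rw [hX, bk]
    have hsub : ({∅, {0, 7}} : Finset (Finset (Fin 8))) ⊆ evens := by decide
    have hzero : ∀ b ∈ evens, b ∉ ({∅, {0, 7}} : Finset (Finset (Fin 8))) →
        weylAltD8 (fun i =>
          ((if (i : ℕ) = 0 then 2 * (k : ℝ) else 0) + rhoD8 i) + nuT b i) t = 0 := by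
      intro b hb hbn
      have hb1 : b ≠ ∅ := by
        intro hcon; exact hbn (by rw [hcon]; simp)
      have hb2 : b ≠ ({0, 7} : Finset (Fin 8)) := by
        intro hcon; exact hbn (by rw [hcon]; simp)
      obtain ⟨i, j, hi0, hj0, hij, hc⟩ :=
        collide2 b (by simpa [evens] using hb) hb1 hb2
      have key : ∀ m : Fin 8, m ≠ 0 →
          ((if (m : ℕ) = 0 then 2 * (k : ℝ) else 0) + rhoD8 m) + nuT b m
            = (icoord b m : ℝ) / 2 := by
        intro m hm
        have hmv : (m : ℕ) ≠ 0 := by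
          exact fun h => hm (Fin.ext h)
        rw [if_neg hmv, zero_add, rho_nu]
      rcases hc with hc | hc
      · exact vanish_eq _ t hij (by rw [key i hi0, key j hj0, hc])
      · refine vanish_neg _ t hij ?_
        rw [key i hi0, key j hj0, hc]
        push_cast
        ring
    have e1 : (fun i : Fin 8 => ((if (i : ℕ) = 0 then 2 * (k : ℝ) else 0) + rhoD8 i)
          + nuT (∅ : Finset (Fin 8)) i)
        = (fun i : Fin 8 =>
            (if (i : ℕ) = 0 then (4 * (k : ℝ) + 1) / 2 else 1 / 2) + rhoD8 i) := by
      funext i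
      by_cases h : (i : ℕ) = 0 <;> simp [nuT, h] <;> ring
    have e2 : (fun i : Fin 8 => ((if (i : ℕ) = 0 then 2 * (k : ℝ) else 0) + rhoD8 i)
          + nuT ({0, 7} : Finset (Fin 8)) i)
        = (fun i : Fin 8 =>
            (if (i : ℕ) = 0 then (4 * (k : ℝ) - 1) / 2
              else if (i : ℕ) = 7 then -(1 / 2) else 1 / 2) + rhoD8 i) := by
      funext i
      fin_cases i <;>
        simp only [nuT, rhoD8, Finset.mem_insert, Finset.mem_singleton, Fin.ext_iff,
          show ((0 : Fin 8) : ℕ) = 0 from rfl, show ((7 : Fin 8) : ℕ) = 7 from rfl] <;>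
        norm_num <;>
        ring
    rw [← Finset.sum_subset hsub hzero,
      Finset.sum_pair (by decide : (∅ : Finset (Fin 8)) ≠ {0, 7}), e1, e2]
  calc
    weylAltD8 (fun i => (if (i : ℕ) = 0 then 2 * (k : ℝ) else 0) + rhoD8 i) t *
        weylAltD8 (fun i => 1 / 2 + rhoD8 i) t
      = weylAltD8 (fun i => (if (i : ℕ) = 0 then 2 * (k : ℝ) else 0) + rhoD8 i) t *
          (weylAltD8 rhoD8 t * X) := by rw [h1]
    _ = (weylAltD8 (fun i => (if (i : ℕ) = 0 then 2 * (k : ℝ) else 0) + rhoD8 i) t * X) *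
          weylAltD8 rhoD8 t := by ring
    _ = _ := by rw [h2]
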